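/- arXiv:2003.10501 — 3 statements merged into one kernel-verified Lean document; each statement's English description precedes it below -/
import Mathlib

section
/- Let n ≥ 1, let U be a connected open subset of ℝ^{n+1}, let v be a nowhere-vanishing C^∞ vector field on U, and let Θ, Θ′ be C^∞ differential n-forms on U such that dΘ = 0, dΘ′ = 0, ι_{v(x)} Θ_x = 0 and ι_{v(x)} Θ′_x = 0 for all x ∈ U, and Θ_x ≠ 0 for every x ∈ U. Then there exists a unique C^∞ function h : U → ℝ with Θ′ = h·Θ, and this h satisfies dh ∧ Θ = 0 identically on U. -/
open scoped BigOperators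

noncomputable section

/-- `ℝ^{n+1}` for `n = m + 1`. -/
abbrev Eucl (m : ℕ) := EuclideanSpace ℝ (Fin (m + 2))

/-- A horizontal `(m+1)`-form vanishing on the complementary basis tuple is zero. -/
lemma aux_zero {m : ℕ} (b : Module.Basis (Fin (m + 2)) ℝ (Eucl m))
    (θ : Eucl m [⋀^Fin (m + 1)]→ₗ[ℝ] ℝ)
    (hh : ∀ w : Fin m → Eucl m, θ (Fin.cons (b 0) w) = 0)
    (hs : θ (fun i => b i.succ) = 0) : θ = 0 := by
  refine b.ext_alternating fun v hv => ?_
  rw [AlternatingMap.zero_apply]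
  by_cases h0 : ∃ j, v j = 0
  · obtain ⟨j, hj⟩ := h0
    set g := (fun i => b (v i)) ∘ Equiv.swap 0 j with hgdef
    have hg0 : g 0 = b 0 := by simp [hgdef, Equiv.swap_apply_left, hj]
    have hgz : θ g = 0 := by
      rw [← Fin.cons_self_tail g, hg0]
      exact hh _
    have hperm := θ.map_perm (fun i => b (v i)) (Equiv.swap 0 j)
    rcases Int.units_eq_one_or (Equiv.Perm.sign (Equiv.swap 0 j)) with hσ | hσ <;>
      rw [hσ, ← hgdef, hgz] at hperm <;> simpa using hperm.symm
  · push_neg at h0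
    set σ : Fin (m + 1) → Fin (m + 1) := fun i => (v i).pred (h0 i) with hσdef
    have hσinj : Function.Injective σ := by
      intro i i' hii
      apply hv
      have : (σ i).succ = (σ i').succ := by rw [hii]
      rwa [hσdef, Fin.succ_pred, Fin.succ_pred] at this
    set e : Equiv.Perm (Fin (m + 1)) :=
      Equiv.ofBijective σ ((Finite.injective_iff_bijective).mp hσinj) with hedef
    have hcomp : (fun i => b (v i)) = (fun i => b i.succ) ∘ e := by
      funext i
      simp only [Function.comp_apply, hedef, Equiv.ofBijective_apply, hσdef, Fin.succ_pred]
    rw [hcomp, θ.map_perm, hs, smul_zero]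

/-- Two horizontal `(m+1)`-forms with the first nonzero are proportional. -/
lemma aux_prop {m : ℕ} (b : Module.Basis (Fin (m + 2)) ℝ (Eucl m))
    (θ θ' : Eucl m [⋀^Fin (m + 1)]→ₗ[ℝ] ℝ)
    (hh : ∀ w : Fin m → Eucl m, θ (Fin.cons (b 0) w) = 0)
    (hh' : ∀ w : Fin m → Eucl m, θ' (Fin.cons (b 0) w) = 0)
    (hne : θ ≠ 0) : ∃ c : ℝ, θ' = c • θ := by
  have hK : θ (fun i => b i.succ) ≠ 0 := fun h => hne (aux_zero b θ hh h)
  set c : ℝ := θ' (fun i => b i.succ) / θ (fun i => b i.succ) with hcdef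
  refine ⟨c, ?_⟩
  have h0 : θ' - c • θ = 0 := by
    refine aux_zero b _ (fun w => ?_) ?_
    · simp [hh, hh']
    · simp only [AlternatingMap.sub_apply, AlternatingMap.smul_apply, smul_eq_mul, hcdef]
      field_simp
      ring
  rw [← sub_eq_zero]
  exact h0

/-- Any nonzero vector is a positive multiple of the first vector of some basis. -/
lemma aux_basis {m : ℕ} (u : Eucl m) (hu : u ≠ 0) :
    ∃ (b : Module.Basis (Fin (m + 2)) ℝ (Eucl m)) (c : ℝ), c ≠ 0 ∧ b 0 = c • u := by
  have hcard : Module.finrank ℝ (Eucl m) = Fintype.card (Fin (m + 2)) := by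
    simp [finrank_euclideanSpace]
  have horth : Orthonormal ℝ (({0} : Set (Fin (m + 2))).restrict
      (fun _ => (‖u‖⁻¹ : ℝ) • u)) := by
    constructor
    · intro i
      show ‖(‖u‖⁻¹ : ℝ) • u‖ = 1
      simp [norm_smul, norm_ne_zero_iff.mpr hu, inv_mul_cancel₀ (norm_ne_zero_iff.mpr hu)]
    · intro i j hij
      exact absurd (Subtype.ext (by
        have hi := i.2; have hj := j.2
        simp only [Set.mem_singleton_iff] at hi hj
        rw [hi, hj])) hij
  obtain ⟨B, hB⟩ := horth.exists_orthonormalBasis_extension_of_card_eq hcard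
  exact ⟨B.toBasis, ‖u‖⁻¹, inv_ne_zero (norm_ne_zero_iff.mpr hu),
    by rw [B.coe_toBasis]; exact hB 0 rfl⟩

/-- The exterior derivative of a `C^∞` `k`-form `Θ` at `x`, evaluated on `k + 1` vectors. -/
def extDerivEval {m k : ℕ} (Θ : Eucl m → (Eucl m [⋀^Fin k]→ₗ[ℝ] ℝ)) (x : Eucl m)
    (w : Fin (k + 1) → Eucl m) : ℝ :=
  ∑ i : Fin (k + 1), (-1 : ℝ) ^ (i : ℕ) * fderiv ℝ (fun y => Θ y (i.removeNth w)) x (w i)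

/-- Let `n ≥ 1` (here `n = m + 1`), let `U ⊆ ℝ^{n+1}` be connected and open,
let `v` be a nowhere-vanishing `C^∞` vector field on `U`, and let `Θ, Θ′` be `C^∞` differential
`n`-forms on `U` which are closed, `v`-horizontal, with `Θ_x ≠ 0` everywhere on `U`.  Then
there is a unique `C^∞` function `h : U → ℝ` with `Θ′ = h·Θ` on `U`, and this `h` satisfies
`dh ∧ Θ = 0` identically on `U`. -/
theorem proportionality_of_dual_forms (m : ℕ)
    (U : Set (Eucl m)) (hU : IsOpen U) (hUconn : IsConnected U)
    (v : Eucl m → Eucl m) (hv : ContDiffOn ℝ (⊤ : ℕ∞) v U)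
    (hv0 : ∀ x ∈ U, v x ≠ 0)
    (Θ Θ' : Eucl m → (Eucl m [⋀^Fin (m + 1)]→ₗ[ℝ] ℝ))
    (hΘ : ∀ w : Fin (m + 1) → Eucl m, ContDiffOn ℝ (⊤ : ℕ∞) (fun x => Θ x w) U)
    (hΘ' : ∀ w : Fin (m + 1) → Eucl m, ContDiffOn ℝ (⊤ : ℕ∞) (fun x => Θ' x w) U)
    (hclosed : ∀ x ∈ U, ∀ w : Fin (m + 2) → Eucl m, extDerivEval Θ x w = 0)
    (hclosed' : ∀ x ∈ U, ∀ w : Fin (m + 2) → Eucl m, extDerivEval Θ' x w = 0)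
    (hhoriz : ∀ x ∈ U, ∀ w : Fin m → Eucl m, Θ x (Fin.cons (v x) w) = 0)
    (hhoriz' : ∀ x ∈ U, ∀ w : Fin m → Eucl m, Θ' x (Fin.cons (v x) w) = 0)
    (hΘne : ∀ x ∈ U, Θ x ≠ 0) :
    ∃ h : Eucl m → ℝ,
      ContDiffOn ℝ (⊤ : ℕ∞) h U ∧
      (∀ x ∈ U, Θ' x = h x • Θ x) ∧
      (∀ x ∈ U, ∀ w : Fin (m + 2) → Eucl m,
        ∑ i : Fin (m + 2), (-1 : ℝ) ^ (i : ℕ) *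
          (fderiv ℝ h x (w i)) * Θ x (i.removeNth w) = 0) ∧
      (∀ h' : Eucl m → ℝ, ContDiffOn ℝ (⊤ : ℕ∞) h' U →
        (∀ x ∈ U, Θ' x = h' x • Θ x) → ∀ x ∈ U, h' x = h x) := by
  classical
  -- Step 1: pointwise proportionality.
  have hpt : ∀ x ∈ U, ∃ c : ℝ, Θ' x = c • Θ x := by
    intro x hx
    obtain ⟨b, c, hc0, hbc⟩ := aux_basis (v x) (hv0 x hx)
    have key : ∀ (θ : Eucl m [⋀^Fin (m + 1)]→ₗ[ℝ] ℝ),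
        (∀ w : Fin m → Eucl m, θ (Fin.cons (v x) w) = 0) →
        ∀ w : Fin m → Eucl m, θ (Fin.cons (b 0) w) = 0 := by
      intro θ hθh w
      have h1 : Fin.cons (b 0) w =
          (Function.update (Fin.cons (v x) w) 0 (c • v x) : Fin (m + 1) → Eucl m) := by
        funext i
        refine Fin.cases ?_ (fun j => ?_) i
        · simp [hbc]
        · simp [Function.update_of_ne (Fin.succ_ne_zero j)]
      have h2 : (Function.update (Fin.cons (v x) w) 0 (v x) : Fin (m + 1) → Eucl m) =
          Fin.cons (v x) w := by
        funext i
        refine Fin.cases ?_ (fun j => ?_) i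
        · simp
        · simp [Function.update_of_ne (Fin.succ_ne_zero j)]
      rw [h1, ← h2, Function.update_idem, θ.map_update_smul, h2, hθh w, smul_zero]
    exact aux_prop b (Θ x) (Θ' x) (key _ (hhoriz x hx)) (key _ (hhoriz' x hx)) (hΘne x hx)
  -- Step 2: choice of a witness tuple where Θ is nonzero, and definition of h.
  have hW : ∀ x : Eucl m, x ∈ U → ∃ w : Fin (m + 1) → Eucl m, Θ x w ≠ 0 := by
    intro x hx
    by_contra hcon
    push_neg at hcon
    exact hΘne x hx (AlternatingMap.ext fun w => hcon w)
  set W : Eucl m → (Fin (m + 1) → Eucl m) := fun x =>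
    if hx : ∃ w : Fin (m + 1) → Eucl m, Θ x w ≠ 0 then hx.choose else 0 with hWdef
  have hWne : ∀ x ∈ U, Θ x (W x) ≠ 0 := by
    intro x hx
    have hex := hW x hx
    simp only [hWdef, dif_pos hex]
    exact hex.choose_spec
  set h : Eucl m → ℝ := fun x => Θ' x (W x) / Θ x (W x) with hhdef
  have hprop : ∀ x ∈ U, Θ' x = h x • Θ x := by
    intro x hx
    obtain ⟨c, hc⟩ := hpt x hx
    have hne := hWne x hx
    have : h x = c := by
      show Θ' x (W x) / Θ x (W x) = c
      rw [hc]
      simp only [AlternatingMap.smul_apply, smul_eq_mul]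
      field_simp
    rw [this, hc]
  -- Step 3: smoothness of h.
  have hsmooth : ContDiffOn ℝ (⊤ : ℕ∞) h U := by
    intro x₀ hx₀
    set w₀ := W x₀ with hw₀
    have hd0 : Θ x₀ w₀ ≠ 0 := hWne x₀ hx₀
    set V : Set (Eucl m) := U ∩ (fun x => Θ x w₀) ⁻¹' {0}ᶜ with hVdef
    have hVopen : IsOpen V := (hΘ w₀).continuousOn.isOpen_inter_preimage hU isOpen_compl_singleton
    have hx₀V : x₀ ∈ V := ⟨hx₀, by simpa using hd0⟩
    have hVU : V ⊆ U := Set.inter_subset_left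
    have hcd : ContDiffOn ℝ (⊤ : ℕ∞) (fun x => Θ' x w₀ / Θ x w₀) V :=
      ((hΘ' w₀).mono hVU).div ((hΘ w₀).mono hVU)
        (fun x hx => by simpa using hx.2)
    have hcongr : ContDiffOn ℝ (⊤ : ℕ∞) h V := by
      refine hcd.congr fun x hx => ?_
      have hx' : Θ x w₀ ≠ 0 := by simpa using hx.2
      have := hprop x (hVU hx)
      have heval : Θ' x w₀ = h x * Θ x w₀ := by
        rw [this]; simp
      have : h x = Θ' x (W x) / Θ x (W x) := rfl
      rw [heval]
      field_simp
    exact ((hcongr.contDiffAt (hVopen.mem_nhds hx₀V)).contDiffWithinAt)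
  refine ⟨h, hsmooth, hprop, ?_, ?_⟩
  · -- Step 4: dh ∧ Θ = 0.
    intro x hx w
    have hdh : DifferentiableAt ℝ h x :=
      (hsmooth.contDiffAt (hU.mem_nhds hx)).differentiableAt (by simp)
    have hterm : ∀ i : Fin (m + 2),
        fderiv ℝ (fun y => Θ' y (i.removeNth w)) x =
          h x • fderiv ℝ (fun y => Θ y (i.removeNth w)) x + Θ x (i.removeNth w) • fderiv ℝ h x := by
      intro i
      have hdg : DifferentiableAt ℝ (fun y => Θ y (i.removeNth w)) x :=
        ((hΘ (i.removeNth w)).contDiffAt (hU.mem_nhds hx)).differentiableAt (by simp)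
      have hEq : (fun y => Θ' y (i.removeNth w)) =ᶠ[nhds x]
          (fun y => h y * Θ y (i.removeNth w)) := by
        filter_upwards [hU.mem_nhds hx] with y hy
        rw [hprop y hy]; simp
      rw [hEq.fderiv_eq]
      exact fderiv_mul hdh hdg
    have hsum := hclosed' x hx w
    rw [extDerivEval] at hsum
    have hsum2 : (∑ i : Fin (m + 2), (-1 : ℝ) ^ (i : ℕ) *
          ((fderiv ℝ h x (w i)) * Θ x (i.removeNth w) +
            h x * fderiv ℝ (fun y => Θ y (i.removeNth w)) x (w i))) = 0 := by
      rw [← hsum]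
      refine Finset.sum_congr rfl fun i _ => ?_
      rw [hterm i]
      simp only [ContinuousLinearMap.add_apply, ContinuousLinearMap.smul_apply, smul_eq_mul]
      ring
    have hsplit : (∑ i : Fin (m + 2), (-1 : ℝ) ^ (i : ℕ) *
          (fderiv ℝ h x (w i)) * Θ x (i.removeNth w)) +
        h x * (∑ i : Fin (m + 2), (-1 : ℝ) ^ (i : ℕ) *
          fderiv ℝ (fun y => Θ y (i.removeNth w)) x (w i)) = 0 := by
      rw [Finset.mul_sum, ← Finset.sum_add_distrib, ← hsum2]
      refine Finset.sum_congr rfl fun i _ => ?_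
      ring
    have hcl := hclosed x hx w
    rw [extDerivEval] at hcl
    rw [hcl, mul_zero, add_zero] at hsplit
    exact hsplit
  · -- Step 5: uniqueness.
    intro h' _ hprop' x hx
    have heq : h' x • Θ x = h x • Θ x := (hprop' x hx).symm.trans (hprop x hx)
    have hsub : (h' x - h x) • Θ x = 0 := by rw [sub_smul (M := Eucl m [⋀^Fin (m + 1)]→ₗ[ℝ] ℝ), heq, sub_self]
    rcases smul_eq_zero.mp hsub with h0 | h0
    · linarith [sub_eq_zero.mp h0]
    · exact absurd h0 (hΘne x hx)
end
end

section
/- Let n ≥ 1, let V be an oriented real vector space of dimension n + 1, let α be a nonzero linear form on V, and let Θ be a nonzero alternating n-linear form on V such that the (n+1)-form α ∧ Θ is a positively oriented volume form on V (i.e. α ∧ Θ takes a positive value on some, equivalently every, positively oriented basis). Then there exist an inner product g on V and a vector u ∈ V such that: u is the g-dual of α (i.e. α(w) = g(u, w) for all w ∈ V), Θ = ι_u vol_g, and α ∧ Θ = vol_g, where vol_g is the alternating (n+1)-form taking the value 1 on every positively oriented g-orthonormal basis of V. -/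
open scoped BigOperators
noncomputable def wedgeOneForm {V : Type*} [AddCommGroup V] [Module ℝ V] {k : ℕ}
    (α : V →ₗ[ℝ] ℝ) (Θ : V [⋀^Fin k]→ₗ[ℝ] ℝ) (w : Fin (k + 1) → V) : ℝ :=
  ∑ i : Fin (k + 1), (-1 : ℝ) ^ (i : ℕ) * α (w i) * Θ (i.removeNth w)

section Aux
variable {V : Type*} [AddCommGroup V] [Module ℝ V] {n : ℕ}

lemma cons_removeNth_eq {β : Type*} (w : Fin (n + 1) → β) (i : Fin (n + 1)) :
    Fin.cons (w i) (i.removeNth w) = fun j => w (i.cycleRange.symm j) := by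
  funext j
  refine Fin.cases ?_ (fun k => ?_) j
  · simp [Fin.cycleRange_symm_zero]
  · simp [Fin.cycleRange_symm_succ, Fin.removeNth]

lemma sign_cycleRange_symm (i : Fin (n + 1)) :
    Equiv.Perm.sign i.cycleRange.symm = (-1) ^ (i : ℕ) := by
  rw [show i.cycleRange.symm = i.cycleRange⁻¹ from rfl, map_inv, Fin.sign_cycleRange]
  simp [inv_pow]

lemma alt_cons_removeNth (μ : V [⋀^Fin (n + 1)]→ₗ[ℝ] ℝ) (w : Fin (n + 1) → V)
    (i : Fin (n + 1)) :
    μ (Fin.cons (w i) (i.removeNth w)) = (-1 : ℝ) ^ (i : ℕ) * μ w := by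
  rw [cons_removeNth_eq]
  have h1 : (fun j => w (i.cycleRange.symm j)) = w ∘ ⇑(i.cycleRange.symm) := rfl
  rw [h1, μ.map_perm w i.cycleRange.symm, sign_cycleRange_symm]
  simp [Units.smul_def, zsmul_eq_mul]

noncomputable def wedgeML (α : V →ₗ[ℝ] ℝ) (Θ : V [⋀^Fin n]→ₗ[ℝ] ℝ) :
    MultilinearMap ℝ (fun _ : Fin (n + 1) => V) ℝ :=
  ∑ i : Fin (n + 1), ((-1 : ℝ) ^ (i : ℕ)) •
    MultilinearMap.domDomCongr i.cycleRange.symm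
      (LinearMap.uncurryLeft (α.smulRight Θ.toMultilinearMap))

lemma wedgeML_apply (α : V →ₗ[ℝ] ℝ) (Θ : V [⋀^Fin n]→ₗ[ℝ] ℝ) (w : Fin (n + 1) → V) :
    wedgeML α Θ w = wedgeOneForm α Θ w := by
  unfold wedgeML wedgeOneForm
  rw [MultilinearMap.sum_apply]
  refine Finset.sum_congr rfl fun i _ => ?_
  have h := cons_removeNth_eq w i
  rw [MultilinearMap.smul_apply, MultilinearMap.domDomCongr_apply, ← h,
    LinearMap.uncurryLeft_apply]
  simp [Fin.tail_cons, smul_eq_mul]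
  ring

lemma curryLeft_apply' (μ : V [⋀^Fin (n + 1)]→ₗ[ℝ] ℝ) (x : V) (v : Fin n → V) :
    (μ.curryLeft x) v = μ (Fin.cons x v) := rfl

lemma wedge_curry (α : V →ₗ[ℝ] ℝ) (μ : V [⋀^Fin (n + 1)]→ₗ[ℝ] ℝ)
    (b : Module.Basis (Fin (n + 1)) ℝ V) (hb : ∀ j : Fin n, α (b j.succ) = 0)
    (w : Fin (n + 1) → V) :
    wedgeOneForm α (μ.curryLeft (b 0)) w = α (b 0) * μ w := by
  classical
  have hb' : ∀ k : Fin (n + 1), k ≠ 0 → α (b k) = 0 := by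
    intro k hk
    obtain ⟨j, rfl⟩ : ∃ j : Fin n, k = j.succ := ⟨k.pred hk, (Fin.succ_pred k hk).symm⟩
    exact hb j
  have key : wedgeML α (μ.curryLeft (b 0)) = α (b 0) • μ.toMultilinearMap := by
    refine Module.Basis.ext_multilinear (fun _ => b) fun f => ?_
    rw [wedgeML_apply]
    unfold wedgeOneForm
    have hterm : ∀ i : Fin (n + 1),
        (-1 : ℝ) ^ (i : ℕ) * α (b (f i)) *
            (μ.curryLeft (b 0)) (i.removeNth fun j => b (f j))
          = if f i = 0 then α (b 0) * μ (fun j => b (f j)) else 0 := by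
      intro i
      by_cases hfi : f i = 0
      · rw [if_pos hfi, curryLeft_apply']
        have hb0 : b 0 = (fun j => b (f j)) i := by show b 0 = b (f i); rw [hfi]
        rw [hb0, alt_cons_removeNth μ (fun j => b (f j)) i]
        beta_reduce
        have h2 : (-1 : ℝ) ^ (i : ℕ) * (-1 : ℝ) ^ (i : ℕ) = 1 := by
          rw [← mul_pow]; norm_num
        linear_combination (α (b (f i)) * (μ fun j => b (f j))) * h2
      · rw [if_neg hfi, hb' _ hfi]; ring
    rw [MultilinearMap.smul_apply]
    calc (∑ i : Fin (n + 1), (-1 : ℝ) ^ (i : ℕ) * α (b (f i)) *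
            (μ.curryLeft (b 0)) (i.removeNth fun j => b (f j)))
        = ∑ i : Fin (n + 1), if f i = 0 then α (b 0) * μ (fun j => b (f j)) else 0 :=
          Finset.sum_congr rfl fun i _ => hterm i
      _ = α (b 0) • μ.toMultilinearMap (fun j => b (f j)) := ?_
    by_cases hinj : Function.Injective f
    · obtain ⟨i₀, hi₀⟩ := (Finite.injective_iff_surjective.mp hinj) 0
      rw [Finset.sum_eq_single i₀]
      · rw [if_pos hi₀]; simp [smul_eq_mul]
      · intro i _ hi
        rw [if_neg]
        intro h0
        exact hi (hinj (h0.trans hi₀.symm))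
      · intro h; exact absurd (Finset.mem_univ i₀) h
    · obtain ⟨i, j, hfij, hij⟩ := Function.not_injective_iff.mp hinj
      have hz : μ (fun k => b (f k)) = 0 :=
        μ.map_eq_zero_of_eq _ (by rw [hfij]) hij
      simp [hz]
  calc wedgeOneForm α (μ.curryLeft (b 0)) w = wedgeML α (μ.curryLeft (b 0)) w :=
        (wedgeML_apply _ _ _).symm
    _ = (α (b 0) • μ.toMultilinearMap) w := by rw [key]
    _ = α (b 0) * μ w := by simp [smul_eq_mul]

lemma injective_factor {n : ℕ} (f : Fin n → Fin (n + 1)) (hf : Function.Injective f) :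
    ∃ (m : Fin (n + 1)) (π : Equiv.Perm (Fin n)), ∀ j, f j = m.succAbove (π j) := by
  have hne : ∃ m : Fin (n + 1), ∀ j, f j ≠ m := by
    by_contra h
    push_neg at h
    have hsurj : Function.Surjective f := fun m => h m
    have := Fintype.card_le_of_surjective f hsurj
    simp at this
  obtain ⟨m, hm⟩ := hne
  choose π0 hπ0 using fun j => Fin.exists_succAbove_eq (hm j)
  have hπinj : Function.Injective π0 := by
    intro a b hab
    apply hf
    rw [← hπ0 a, ← hπ0 b, hab]
  exact ⟨m, Equiv.ofBijective π0 (Finite.injective_iff_bijective.mp hπinj),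
    fun j => by rw [Equiv.ofBijective_apply, hπ0]⟩

end Aux
set_option maxHeartbeats 1600000 in
/-- Let `n ≥ 1`, let `V` be an oriented real vector space of dimension
`n + 1`, let `α` be a nonzero linear form on `V`, and let `Θ` be a nonzero alternating
`n`-linear form on `V` such that `α ∧ Θ` is a positively oriented volume form (it is positive
on every positively oriented basis).  Then there exist an inner product `g` on `V` (a symmetric
positive-definite bilinear form) and a vector `u ∈ V` such that `u` is the `g`-dual of `α`,
`Θ = ι_u vol_g` and `α ∧ Θ = vol_g`, where `vol_g` is the alternating `(n+1)`-form taking the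
value `1` on every positively oriented `g`-orthonormal basis of `V`. -/
theorem calabi_metric_for_dual_pair (n : ℕ) (hn : 1 ≤ n) (V : Type*)
    [AddCommGroup V] [Module ℝ V]
    (hdim : Module.finrank ℝ V = n + 1)
    (o : Orientation ℝ V (Fin (n + 1)))
    (α : V →ₗ[ℝ] ℝ) (hα : α ≠ 0)
    (Θ : V [⋀^Fin n]→ₗ[ℝ] ℝ) (hΘ : Θ ≠ 0)
    (hpos : ∀ b : Module.Basis (Fin (n + 1)) ℝ V, b.orientation = o → 0 < wedgeOneForm α Θ ⇑b) :
    ∃ (g : V →ₗ[ℝ] V →ₗ[ℝ] ℝ) (u : V) (volg : V [⋀^Fin (n + 1)]→ₗ[ℝ] ℝ),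
      (∀ x y : V, g x y = g y x) ∧
      (∀ x : V, x ≠ 0 → 0 < g x x) ∧
      (∀ b : Module.Basis (Fin (n + 1)) ℝ V,
        (∀ i j, g (b i) (b j) = if i = j then 1 else 0) → b.orientation = o → volg ⇑b = 1) ∧
      (∀ w : V, α w = g u w) ∧
      (∀ w : Fin n → V, Θ w = volg (Fin.cons u w)) ∧
      (∀ w : Fin (n + 1) → V, wedgeOneForm α Θ w = volg w) := by
  classical
  have hfd : FiniteDimensional ℝ V := FiniteDimensional.of_finrank_pos (by rw [hdim]; omega)
  set b1 : Module.Basis (Fin (n + 1)) ℝ V := Module.finBasisOfFinrankEq ℝ V hdim with hb1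
  set b0 : Module.Basis (Fin (n + 1)) ℝ V := b1.adjustToOrientation o with hb0def
  have hb0o : b0.orientation = o := b1.orientation_adjustToOrientation o
  set ω : V [⋀^Fin (n + 1)]→ₗ[ℝ] ℝ := b0.det with hωdef
  set u0 : V := ∑ j : Fin (n + 1), ((-1 : ℝ) ^ (j : ℕ) * Θ (j.removeNth ⇑b0)) • b0 j with hu0
  have hαu0 : α u0 = wedgeOneForm α Θ ⇑b0 := by
    rw [hu0, map_sum]
    unfold wedgeOneForm
    refine Finset.sum_congr rfl fun i _ => ?_
    rw [map_smul, smul_eq_mul]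
    ring
  have hs : 0 < α u0 := by rw [hαu0]; exact hpos b0 hb0o
  -- Θ is the contraction of ω with u0
  have hC : Θ = ω.curryLeft u0 := by
    refine Module.Basis.ext_alternating b0 fun v hv => ?_
    obtain ⟨m, π, hvfac⟩ := injective_factor v hv
    have hfun : (fun i => b0 (v i)) = (m.removeNth ⇑b0) ∘ ⇑π := by
      funext j
      show b0 (v j) = (m.removeNth ⇑b0) (π j)
      rw [hvfac j]
      rfl
    rw [hfun, Θ.map_perm (m.removeNth ⇑b0) π, (ω.curryLeft u0).map_perm (m.removeNth ⇑b0) π]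
    congr 1
    have hterm : ∀ j : Fin (n + 1),
        ((-1 : ℝ) ^ (j : ℕ) * Θ (j.removeNth ⇑b0)) * ω (Fin.cons (b0 j) (m.removeNth ⇑b0))
          = if j = m then Θ (m.removeNth ⇑b0) else 0 := by
      intro j
      by_cases hj : j = m
      · subst hj
        rw [if_pos rfl, alt_cons_removeNth ω ⇑b0 j]
        have hω1 : ω ⇑b0 = 1 := b0.det_self
        rw [hω1]
        have h2 : (-1 : ℝ) ^ (j : ℕ) * (-1 : ℝ) ^ (j : ℕ) = 1 := by rw [← mul_pow]; norm_num
        linear_combination (Θ (j.removeNth ⇑b0)) * h2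
      · rw [if_neg hj]
        obtain ⟨k, hk⟩ := Fin.exists_succAbove_eq hj
        have hzero : ω (Fin.cons (b0 j) (m.removeNth ⇑b0)) = 0 := by
          have hval : (Fin.cons (b0 j) (m.removeNth ⇑b0) : Fin (n + 1) → V) 0
              = (Fin.cons (b0 j) (m.removeNth ⇑b0) : Fin (n + 1) → V) k.succ := by
            rw [Fin.cons_zero, Fin.cons_succ]
            rw [show (m.removeNth ⇑b0) k = b0 (m.succAbove k) from rfl, hk]
          exact ω.map_eq_zero_of_eq _ hval (Fin.succ_ne_zero k).symm
        rw [hzero]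
        ring
    have hupd : ∀ x : V, Function.update (Fin.cons u0 (m.removeNth ⇑b0) : Fin (n + 1) → V) 0 x
        = (Fin.cons x (m.removeNth ⇑b0) : Fin (n + 1) → V) := fun x =>
      Fin.update_cons_zero _ _ _
    have hRHS : (ω.curryLeft u0) (m.removeNth ⇑b0)
        = ∑ j : Fin (n + 1), ((-1 : ℝ) ^ (j : ℕ) * Θ (j.removeNth ⇑b0)) *
            ω (Fin.cons (b0 j) (m.removeNth ⇑b0)) := by
      calc (ω.curryLeft u0) (m.removeNth ⇑b0) = ω (Fin.cons u0 (m.removeNth ⇑b0)) :=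
            curryLeft_apply' ω u0 _
        _ = ω (Function.update (Fin.cons u0 (m.removeNth ⇑b0)) 0
              (∑ j : Fin (n + 1), ((-1 : ℝ) ^ (j : ℕ) * Θ (j.removeNth ⇑b0)) • b0 j)) := by
            rw [hupd, ← hu0]
        _ = ∑ j : Fin (n + 1), ω (Function.update (Fin.cons u0 (m.removeNth ⇑b0)) 0
              (((-1 : ℝ) ^ (j : ℕ) * Θ (j.removeNth ⇑b0)) • b0 j)) :=
            ω.toMultilinearMap.map_update_sum Finset.univ 0 _ _
        _ = ∑ j : Fin (n + 1), ((-1 : ℝ) ^ (j : ℕ) * Θ (j.removeNth ⇑b0)) *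
              ω (Fin.cons (b0 j) (m.removeNth ⇑b0)) := by
            refine Finset.sum_congr rfl fun j _ => ?_
            rw [ω.map_update_smul _ 0 _ _, smul_eq_mul, hupd]
    rw [hRHS, Finset.sum_congr rfl fun j _ => hterm j, Finset.sum_ite_eq' Finset.univ m]
    simp
  -- definitions of u and volg
  set u : V := (α u0)⁻¹ • u0 with hu
  have hαu : α u = 1 := by rw [hu, map_smul, smul_eq_mul, inv_mul_cancel₀ hs.ne']
  set volg : V [⋀^Fin (n + 1)]→ₗ[ℝ] ℝ := α u0 • ω with hvolg
  -- kernel of α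
  obtain ⟨x0, hx0⟩ : ∃ x, α x ≠ 0 := by
    by_contra h
    push_neg at h
    exact hα (LinearMap.ext fun x => by simp [h x])
  have hsurj : Function.Surjective α := fun r =>
    ⟨(r * (α x0)⁻¹) • x0, by rw [map_smul, smul_eq_mul]; field_simp⟩
  have hker : Module.finrank ℝ (LinearMap.ker α) = n := by
    have h1 := LinearMap.finrank_range_add_finrank_ker α
    rw [LinearMap.range_eq_top.mpr hsurj, finrank_top, Module.finrank_self, hdim] at h1
    omega
  set kb : Module.Basis (Fin n) ℝ (LinearMap.ker α) :=
    Module.finBasisOfFinrankEq ℝ (LinearMap.ker α) hker with hkb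
  set vfam : Fin (n + 1) → V := Fin.cons u (fun i => ((kb i : V))) with hvfam
  have hli : LinearIndependent ℝ vfam := by
    rw [hvfam, linearIndependent_fin_cons]
    constructor
    · exact (kb.linearIndependent).map' (LinearMap.ker α).subtype
        (Submodule.ker_subtype _)
    · have hsp : Submodule.span ℝ (Set.range fun i => ((kb i : V))) = LinearMap.ker α := by
        have hr : (Set.range fun i => ((kb i : V)))
            = (LinearMap.ker α).subtype '' Set.range ⇑kb := by
          rw [← Set.range_comp]; rfl
        rw [hr, ← Submodule.map_span, kb.span_eq, Submodule.map_subtype_top]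
      rw [hsp]
      intro hmem
      have h0 : α u = 0 := LinearMap.mem_ker.mp hmem
      rw [hαu] at h0
      norm_num at h0
  set bA : Module.Basis (Fin (n + 1)) ℝ V :=
    basisOfLinearIndependentOfCardEqFinrank hli (by rw [Fintype.card_fin, hdim]) with hbAdef
  have hbAc : ⇑bA = vfam := coe_basisOfLinearIndependentOfCardEqFinrank _ _
  have hbA0 : bA 0 = u := by rw [show bA 0 = vfam 0 from congrFun hbAc 0, hvfam, Fin.cons_zero]
  have hbAsucc : ∀ j : Fin n, bA j.succ = (kb j : V) := fun j => by
    rw [show bA j.succ = vfam j.succ from congrFun hbAc j.succ, hvfam, Fin.cons_succ]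
  set t : ℝ := volg ⇑bA with htdef
  have ht : t ≠ 0 := by
    rw [htdef, hvolg, AlternatingMap.smul_apply, smul_eq_mul]
    exact mul_ne_zero hs.ne' (b0.isUnit_det bA).ne_zero
  have h01 : (0 : Fin (n + 1)) ≠ 1 := by
    intro h
    have h2 := congrArg Fin.val h
    rw [Fin.val_zero, Fin.val_one' (n + 1)] at h2
    rw [Nat.mod_eq_of_lt (by omega)] at h2
    omega
  set ε : Fin (n + 1) → ℝˣ := fun i => if i = 1 then (Units.mk0 t ht)⁻¹ else 1 with hε
  set cB : Module.Basis (Fin (n + 1)) ℝ V := bA.unitsSMul ε with hcBdef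
  have hcBi : ∀ i, cB i = (ε i : ℝ) • bA i := fun i => by
    rw [hcBdef, Module.Basis.unitsSMul_apply, Units.smul_def]
  have hε0 : ε 0 = 1 := by rw [hε]; exact if_neg h01
  have hcB0 : cB 0 = u := by rw [hcBi 0, hε0, Units.val_one, one_smul, hbA0]
  have hcBsucc0 : ∀ j : Fin n, α (cB j.succ) = 0 := by
    intro j
    rw [hcBi, hbAsucc, map_smul, smul_eq_mul]
    have hmem : ((kb j : V)) ∈ LinearMap.ker α := SetLike.coe_mem (kb j)
    rw [LinearMap.mem_ker.mp hmem, mul_zero]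
  have hprod : (∏ i : Fin (n + 1), (ε i : ℝ)) = t⁻¹ := by
    rw [Finset.prod_eq_single (1 : Fin (n + 1))]
    · rw [hε]; simp
    · intro i _ hi
      rw [hε]; simp [hi]
    · intro h; exact absurd (Finset.mem_univ _) h
  have hvolcB : volg ⇑cB = 1 := by
    have hms := volg.toMultilinearMap.map_smul_univ (fun i => ((ε i : ℝ))) ⇑bA
    have hcoe : ⇑cB = fun i => (ε i : ℝ) • bA i := funext hcBi
    calc volg ⇑cB = volg.toMultilinearMap (fun i => (ε i : ℝ) • bA i) := by rw [hcoe]; rfl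
      _ = (∏ i : Fin (n + 1), (ε i : ℝ)) • volg.toMultilinearMap ⇑bA := hms
      _ = t⁻¹ * t := by rw [hprod]; rfl
      _ = 1 := inv_mul_cancel₀ ht
  -- the metric
  set g : V →ₗ[ℝ] V →ₗ[ℝ] ℝ := LinearMap.mk₂ ℝ
      (fun x y => ∑ i : Fin (n + 1), cB.repr x i * cB.repr y i)
      (fun m1 m2 y => by
        simp only [map_add, Finsupp.add_apply, add_mul]
        rw [Finset.sum_add_distrib])
      (fun a m y => by
        simp only [map_smul, Finsupp.smul_apply, smul_eq_mul, Finset.mul_sum, mul_assoc])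
      (fun x n1 n2 => by
        simp only [map_add, Finsupp.add_apply, mul_add]
        rw [Finset.sum_add_distrib])
      (fun a x y => by
        simp only [map_smul, Finsupp.smul_apply, smul_eq_mul, Finset.mul_sum]
        refine Finset.sum_congr rfl fun i _ => by ring) with hgdef
  have hgapp : ∀ x y, g x y = ∑ i : Fin (n + 1), cB.repr x i * cB.repr y i := fun x y => by
    rw [hgdef]; rfl
  -- the contraction identity, final form
  have h5 : ∀ w : Fin n → V, Θ w = volg (Fin.cons u w) := by
    intro w
    have e1 : volg (Fin.cons u w) = α u0 * ω (Fin.cons u w) := by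
      rw [hvolg, AlternatingMap.smul_apply, smul_eq_mul]
    have e2 : ω (Fin.cons u w) = (α u0)⁻¹ * ω (Fin.cons u0 w) := by
      have h := congrArg (fun z => z w) (map_smul ω.curryLeft ((α u0)⁻¹) u0)
      simp only [AlternatingMap.smul_apply, smul_eq_mul] at h
      rw [curryLeft_apply', curryLeft_apply'] at h
      rw [← hu] at h
      exact h
    rw [hC, curryLeft_apply', e1, e2]
    field_simp
  refine ⟨g, u, volg, ?_, ?_, ?_, ?_, h5, ?_⟩
  · -- symmetry
    intro x y
    rw [hgapp, hgapp]
    exact Finset.sum_congr rfl fun i _ => mul_comm _ _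
  · -- positivity
    intro x hx
    rw [hgapp]
    have hne : cB.repr x ≠ 0 := fun h => hx ((LinearEquiv.map_eq_zero_iff cB.repr).mp h)
    obtain ⟨i, hi⟩ : ∃ i, cB.repr x i ≠ 0 := by
      by_contra h
      push_neg at h
      exact hne (Finsupp.ext h)
    exact Finset.sum_pos' (fun i _ => mul_self_nonneg _)
      ⟨i, Finset.mem_univ i, mul_self_pos.mpr hi⟩
  · -- orthonormal oriented bases have volume one
    intro b hb hbo
    have hωcB : ω ⇑cB = (α u0)⁻¹ := by
      have h := hvolcB
      rw [hvolg, AlternatingMap.smul_apply, smul_eq_mul] at h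
      exact eq_inv_of_mul_eq_one_right h
    have hcBo : cB.orientation = o := by
      have h := (b0.orientation_eq_iff_det_pos cB).mpr
        (by rw [show b0.det ⇑cB = ω ⇑cB from rfl, hωcB]; exact inv_pos.mpr hs)
      exact h.symm.trans hb0o
    have hdetpos : 0 < cB.det ⇑b :=
      (cB.orientation_eq_iff_det_pos b).mp (hcBo.trans hbo.symm)
    have hrep : volg = cB.det := by
      have h := volg.eq_smul_basis_det cB
      rwa [hvolcB, one_smul] at h
    have hMtM : (cB.toMatrix ⇑b).transpose * (cB.toMatrix ⇑b) = 1 := by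
      ext i j
      rw [Matrix.mul_apply, Matrix.one_apply]
      have h := hb i j
      rw [hgapp] at h
      rw [← h]
      refine Finset.sum_congr rfl fun k _ => ?_
      rw [Matrix.transpose_apply, Module.Basis.toMatrix_apply, Module.Basis.toMatrix_apply]
    have hdet2 : (cB.toMatrix ⇑b).det * (cB.toMatrix ⇑b).det = 1 := by
      have h := congrArg Matrix.det hMtM
      rwa [Matrix.det_mul, Matrix.det_transpose, Matrix.det_one] at h
    have hdapp : cB.det ⇑b = (cB.toMatrix ⇑b).det := cB.det_apply ⇑b
    have hone : cB.det ⇑b = 1 := by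
      rw [hdapp] at hdetpos ⊢
      nlinarith [hdet2, hdetpos]
    rw [hrep]
    exact hone
  · -- u is the g-dual of α
    intro w
    have hru : cB.repr u = Finsupp.single 0 1 := by rw [← hcB0, cB.repr_self]
    have hgw : g u w = cB.repr w 0 := by
      rw [hgapp, hru, Finset.sum_eq_single (0 : Fin (n + 1))]
      · rw [Finsupp.single_eq_same, one_mul]
      · intro i _ hi
        rw [Finsupp.single_eq_of_ne hi, zero_mul]
      · intro h; exact absurd (Finset.mem_univ _) h
    have hαw : α w = cB.repr w 0 := by
      conv_lhs => rw [← cB.sum_repr w]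
      rw [map_sum, Fin.sum_univ_succ]
      simp only [map_smul, smul_eq_mul]
      rw [hcB0, hαu, mul_one]
      rw [Finset.sum_eq_zero fun j _ => by rw [hcBsucc0 j, mul_zero]]
      ring
    rw [hαw, hgw]
  · -- the wedge identity
    intro w
    have hΘcurry : Θ = volg.curryLeft (cB 0) := by
      ext v
      rw [curryLeft_apply', hcB0]
      exact h5 v
    rw [hΘcurry, wedge_curry α volg cB hcBsucc0 w, hcB0, hαu, one_mul]
end

section
/- Let n ≥ 2, let V be a real vector space of dimension 2n, let ω be a nondegenerate alternating 2-form on V (i.e. for every nonzero v ∈ V there is w with ω(v,w) ≠ 0), let v ∈ V, and set W := {w ∈ V : ω(v, w) = 0}. Then the (2n−2)-form ω^{∧(n−1)} (the (n−1)-fold wedge power of ω) satisfies ω^{∧(n−1)}(v, w₁, …, w_{2n−3}) = 0 for all w₁, …, w_{2n−3} ∈ W. -/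
open scoped BigOperators

/-- The `k`-fold wedge power of an alternating `2`-form `ω`, as a function of `2k` vectors.
This is the full antisymmetrized sum over all permutations, which equals `2^k·k!` times the
shuffle-sum wedge power; the vanishing claim below is independent of this positive
normalization constant. -/
noncomputable def wedgePowTwoForm {V : Type*} [AddCommGroup V] [Module ℝ V]
    (ω : V [⋀^Fin 2]→ₗ[ℝ] ℝ) (k : ℕ) (z : Fin (2 * k) → V) : ℝ :=
  ∑ σ : Equiv.Perm (Fin (2 * k)), ((Equiv.Perm.sign σ : ℤ) : ℝ) *
    ∏ i : Fin k,
      ω ![z (σ ⟨2 * (i : ℕ), by have := i.isLt; omega⟩),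
          z (σ ⟨2 * (i : ℕ) + 1, by have := i.isLt; omega⟩)]

lemma two_form_swap {V : Type*} [AddCommGroup V] [Module ℝ V]
    (ω : V [⋀^Fin 2]→ₗ[ℝ] ℝ) (a b : V) : ω ![a, b] = - ω ![b, a] := by
  have h := ω.map_swap ![b, a] (show (0 : Fin 2) ≠ 1 by decide)
  have he : (![b, a] ∘ Equiv.swap (0 : Fin 2) 1) = ![a, b] := by
    funext i
    fin_cases i <;> simp [Equiv.swap_apply_left, Equiv.swap_apply_right]
  rwa [he] at h

/-- Let `n ≥ 2` (here `n = m + 2`), let `V` be a real vector space of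
dimension `2n`, let `ω` be a nondegenerate alternating `2`-form on `V`, let `v ∈ V`, and set
`W := {w : ω(v, w) = 0}`.  Then the `(2n−2)`-form `ω^{∧(n−1)}` satisfies
`ω^{∧(n−1)}(v, w₁, …, w_{2n−3}) = 0` for all `w₁, …, w_{2n−3} ∈ W.` -/
theorem hamiltonian_field_in_kernel_of_wedge_power (m : ℕ) (V : Type*)
    [AddCommGroup V] [Module ℝ V]
    (hdim : Module.finrank ℝ V = 2 * (m + 2))
    (ω : V [⋀^Fin 2]→ₗ[ℝ] ℝ)
    (hnd : ∀ x : V, x ≠ 0 → ∃ y : V, ω ![x, y] ≠ 0)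
    (v : V) (w : Fin (2 * m + 1) → V)
    (hw : ∀ i, ω ![v, w i] = 0) :
    wedgePowTwoForm ω (m + 1) (Fin.cons v w) = 0 := by
  classical
  set z : Fin (2 * (m + 1)) → V := Fin.cons v w with hzdef
  have hz0 : z 0 = v := rfl
  have hz : ∀ k : Fin (2 * (m + 1)), ω ![v, z k] = 0 := by
    intro k
    refine Fin.cases ?_ ?_ k
    · show ω ![v, v] = 0
      exact ω.map_eq_zero_of_eq ![v, v] (i := 0) (j := 1) rfl (by decide)
    · intro j
      exact hw j
  unfold wedgePowTwoForm
  apply Finset.sum_eq_zero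
  intro σ _
  obtain ⟨k, hk⟩ : ∃ k, σ k = 0 := ⟨σ⁻¹ 0, Equiv.apply_symm_apply σ 0⟩
  have hklt : (k : ℕ) < 2 * (m + 1) := k.isLt
  have hilt : (k : ℕ) / 2 < m + 1 := by omega
  set i : Fin (m + 1) := ⟨(k : ℕ) / 2, hilt⟩ with hidef
  have hfac : ω ![z (σ ⟨2 * (i : ℕ), by omega⟩),
      z (σ ⟨2 * (i : ℕ) + 1, by omega⟩)] = 0 := by
    rcases Nat.even_or_odd (k : ℕ) with he | ho
    · rw [Nat.even_iff] at he
      have h1 : (⟨2 * (i : ℕ), by omega⟩ : Fin (2 * (m + 1))) = k := by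
        apply Fin.ext
        show 2 * ((k : ℕ) / 2) = (k : ℕ)
        omega
      rw [h1, hk, hz0]
      exact hz _
    · rw [Nat.odd_iff] at ho
      have h1 : (⟨2 * (i : ℕ) + 1, by omega⟩ : Fin (2 * (m + 1))) = k := by
        apply Fin.ext
        show 2 * ((k : ℕ) / 2) + 1 = (k : ℕ)
        omega
      rw [h1, hk, hz0, two_form_swap]
      rw [hz]
      simp
  rw [Finset.prod_eq_zero (Finset.mem_univ i) hfac, mul_zero]
end
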